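/- Let V_1, ..., V_m be complex n×n matrices that mutually commute and satisfy V_1* V_1 + ... + V_m* V_m = Id. Then the matrices are simultaneously unitarily diagonalizable: there exists a unitary matrix U and diagonal matrices D_1, ..., D_m such that V_α = U D_α U* for every α. -/

import Mathlib

open Matrix Module

lemma exists_common_eigenvector (m : ℕ) :
    ∀ (W : Type) [AddCommGroup W] [Module ℂ W] [FiniteDimensional ℂ W] [Nontrivial W]
    (f : Fin m → Module.End ℂ W), (∀ α β, Commute (f α) (f β)) →
    ∃ v : W, v ≠ 0 ∧ ∀ α, ∃ μ : ℂ, f α v = μ • v := by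
  induction m with
  | zero =>
    intro W _ _ _ _ f _
    obtain ⟨v, hv⟩ := exists_ne (0 : W)
    exact ⟨v, hv, fun α => α.elim0⟩
  | succ k ih =>
    intro W _ _ _ _ f hcomm
    obtain ⟨μ, hμ⟩ := Module.End.exists_eigenvalue (f 0)
    set E := (f 0).eigenspace μ with hE
    haveI : Nontrivial E := Submodule.nontrivial_iff_ne_bot.mpr hμ
    have hmapsTo : ∀ α, ∀ x ∈ E, f α x ∈ E := by
      intro α x hx
      rw [hE, Module.End.mem_eigenspace_iff] at hx ⊢
      have := congrArg (fun g : Module.End ℂ W => g x) (hcomm 0 α)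
      simp only [Module.End.mul_apply] at this
      rw [this, hx, LinearMap.map_smul]
    set g : Fin k → Module.End ℂ E := fun α => (f α.succ).restrict (hmapsTo α.succ) with hg
    have hgcomm : ∀ α β, Commute (g α) (g β) := by
      intro α β
      refine LinearMap.ext fun x => Subtype.ext ?_
      have h2 := congrArg (fun h : Module.End ℂ W => h (x : W)) (hcomm α.succ β.succ)
      simp only [Module.End.mul_apply] at h2
      simpa [hg, LinearMap.restrict_apply] using h2
    obtain ⟨v, hv0, hv⟩ := ih E g hgcomm
    refine ⟨(v : W), by simpa using hv0, ?_⟩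
    intro α
    refine Fin.cases ?_ ?_ α
    · exact ⟨μ, Module.End.mem_eigenspace_iff.mp v.2⟩
    · intro β
      obtain ⟨ν, hν⟩ := hv β
      refine ⟨ν, ?_⟩
      have : ((g β) v : W) = ν • (v : W) := by rw [hν]; rfl
      simpa [hg, LinearMap.restrict_apply] using this

def expandM {n : ℕ} (A : Matrix (Fin n) (Fin n) ℂ) : Matrix (Fin (n+1)) (Fin (n+1)) ℂ :=
  Matrix.of fun i j =>
    Fin.cases (Fin.cases 1 (fun _ => 0) j) (fun i' => Fin.cases 0 (fun j' => A i' j') j) i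

@[simp] lemma expandM_00 {n : ℕ} (A : Matrix (Fin n) (Fin n) ℂ) : expandM A 0 0 = 1 := rfl
@[simp] lemma expandM_0s {n : ℕ} (A : Matrix (Fin n) (Fin n) ℂ) (j : Fin n) :
    expandM A 0 j.succ = 0 := rfl
@[simp] lemma expandM_s0 {n : ℕ} (A : Matrix (Fin n) (Fin n) ℂ) (i : Fin n) :
    expandM A i.succ 0 = 0 := rfl
@[simp] lemma expandM_ss {n : ℕ} (A : Matrix (Fin n) (Fin n) ℂ) (i j : Fin n) :
    expandM A i.succ j.succ = A i j := rfl

@[simp] lemma expandM_conjTranspose {n : ℕ} (A : Matrix (Fin n) (Fin n) ℂ) :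
    (expandM A)ᴴ = expandM Aᴴ := by
  ext i j
  refine Fin.cases ?_ (fun i' => ?_) i <;> refine Fin.cases ?_ (fun j' => ?_) j <;>
    simp [conjTranspose_apply]

@[simp] lemma expandM_one {n : ℕ} : expandM (1 : Matrix (Fin n) (Fin n) ℂ) = 1 := by
  ext i j
  refine Fin.cases ?_ (fun i' => ?_) i <;> refine Fin.cases ?_ (fun j' => ?_) j <;>
    simp [Matrix.one_apply, Fin.succ_ne_zero, (Fin.succ_ne_zero _).symm, Fin.succ_inj]

lemma expandM_mul {n : ℕ} (A B : Matrix (Fin n) (Fin n) ℂ) :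
    expandM A * expandM B = expandM (A * B) := by
  ext i j
  refine Fin.cases ?_ (fun i' => ?_) i <;> refine Fin.cases ?_ (fun j' => ?_) j <;>
    simp [Matrix.mul_apply, Fin.sum_univ_succ]

lemma simul_triang {m : ℕ} (n : ℕ) :
    ∀ (V : Fin m → Matrix (Fin n) (Fin n) ℂ), (∀ α β, V α * V β = V β * V α) →
    ∃ U : Matrix (Fin n) (Fin n) ℂ, Uᴴ * U = 1 ∧
      ∀ α (i j : Fin n), (j : ℕ) < (i : ℕ) → (Uᴴ * V α * U) i j = 0 := by
  induction n with
  | zero =>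
    intro V _
    exact ⟨1, by simp, fun α i => i.elim0⟩
  | succ k ih =>
    intro V hcomm
    -- common eigenvector
    obtain ⟨v, hv0, hv⟩ := exists_common_eigenvector m (EuclideanSpace ℂ (Fin (k+1)))
      (fun α => Matrix.toEuclideanLin (V α)) (by
        intro α β
        have h := hcomm α β
        refine LinearMap.ext fun x => ?_
        simp only [Module.End.mul_apply, Matrix.toEuclideanLin_apply]
        simp [Matrix.mulVec_mulVec, ← h])
    set w : EuclideanSpace ℂ (Fin (k+1)) := (‖v‖ : ℂ)⁻¹ • v with hwdef
    have hw0 : w ≠ 0 := by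
      simp [hwdef, smul_eq_zero, hv0, norm_eq_zero]
    have hwnorm : ‖w‖ = 1 := norm_smul_inv_norm hv0
    have hweig : ∀ α, ∃ μ : ℂ, ∀ l, (V α *ᵥ (fun i => w i)) l = μ * w l := by
      intro α
      obtain ⟨μ, hμ⟩ := hv α
      refine ⟨μ, fun l => ?_⟩
      have h2 : Matrix.toEuclideanLin (V α) w = μ • w := by
        rw [hwdef, LinearMap.map_smul, hμ, smul_comm]
      rw [Matrix.toEuclideanLin_apply] at h2
      have := congrFun (congrArg (WithLp.equiv 2 (Fin (k+1) → ℂ)) h2) l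
      simpa using this
    -- orthonormal basis of the orthogonal complement
    haveI : Fact (finrank ℂ (EuclideanSpace ℂ (Fin (k+1))) = k+1) := ⟨finrank_euclideanSpace_fin⟩
    have hrank : finrank ℂ ((ℂ ∙ w)ᗮ) = k := Submodule.finrank_orthogonal_span_singleton hw0
    set b := (stdOrthonormalBasis ℂ ((ℂ ∙ w)ᗮ)).reindex (finCongr hrank) with hbdef
    set cols : Fin (k+1) → EuclideanSpace ℂ (Fin (k+1)) :=
      Fin.cons w (fun j => (b j : EuclideanSpace ℂ (Fin (k+1)))) with hcols
    set U : Matrix (Fin (k+1)) (Fin (k+1)) ℂ := Matrix.of (fun i j => cols j i) with hUdef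
    have horth : Orthonormal ℂ cols := by
      rw [orthonormal_iff_ite]
      intro i j
      refine Fin.cases ?_ (fun i' => ?_) i <;> refine Fin.cases ?_ (fun j' => ?_) j
      · simp [hcols, inner_self_eq_norm_sq_to_K, hwnorm]
      · have : (inner ℂ w ((b j' : EuclideanSpace ℂ (Fin (k+1)))) : ℂ) = 0 :=
          (b j').2 w (Submodule.mem_span_singleton_self w)
        simp [hcols, this, (Fin.succ_ne_zero j').symm]
      · have : (inner ℂ w ((b i' : EuclideanSpace ℂ (Fin (k+1)))) : ℂ) = 0 :=
          (b i').2 w (Submodule.mem_span_singleton_self w)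
        rw [inner_eq_zero_symm] at this
        simp [hcols, this, Fin.succ_ne_zero i']
      · have hb := orthonormal_iff_ite.mp b.orthonormal i' j'
        rw [Submodule.coe_inner] at hb
        simp only [hcols, Fin.cons_succ]
        rw [hb]
        simp [Fin.succ_inj]
    have hU : Uᴴ * U = 1 := by
      ext i j
      have hb := orthonormal_iff_ite.mp horth i j
      rw [PiLp.inner_apply] at hb
      simp only [RCLike.inner_apply] at hb
      simpa [Matrix.mul_apply, conjTranspose_apply, Matrix.one_apply, hUdef,
        RCLike.star_def, mul_comm] using hb
    have hUU : U * Uᴴ = 1 := mul_eq_one_comm.mp hU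
    set T : Fin m → Matrix (Fin (k+1)) (Fin (k+1)) ℂ := fun α => Uᴴ * V α * U with hTdef
    have hcol0 : ∀ l, U l 0 = w l := fun l => by simp [hUdef, hcols]
    have hT0 : ∀ α (i : Fin k), T α i.succ 0 = 0 := by
      intro α i
      obtain ⟨μ, hμ⟩ := hweig α
      have h1 : ∀ l, (V α * U) l 0 = μ * U l 0 := by
        intro l
        have := hμ l
        rw [Matrix.mul_apply]
        simpa [Matrix.mulVec, dotProduct, hcol0] using this
      have h3 : T α i.succ 0 = ∑ l, star (U l i.succ) * (μ * U l 0) := by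
        show (Uᴴ * V α * U) i.succ 0 = _
        rw [Matrix.mul_assoc, Matrix.mul_apply]
        exact Finset.sum_congr rfl fun l _ => by rw [conjTranspose_apply, h1]
      have h2 : ∑ l, star (U l i.succ) * U l 0 = 0 := by
        have := congrFun (congrFun hU i.succ) 0
        simpa [Matrix.mul_apply, conjTranspose_apply, Matrix.one_apply,
          Fin.succ_ne_zero] using this
      calc T α i.succ 0 = μ * ∑ l, star (U l i.succ) * U l 0 := by
            rw [h3, Finset.mul_sum]; exact Finset.sum_congr rfl fun l _ => by ring
        _ = 0 := by rw [h2, mul_zero]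
    set Wm : Fin m → Matrix (Fin k) (Fin k) ℂ :=
      fun α => Matrix.of fun i j => T α i.succ j.succ with hWdef
    have hTT : ∀ α β, T α * T β = Uᴴ * (V α * V β) * U := by
      intro α β
      simp only [hTdef, Matrix.mul_assoc]
      rw [← Matrix.mul_assoc U Uᴴ (V β * U), hUU, Matrix.one_mul]
    have hWprod : ∀ α β, Wm α * Wm β = Matrix.of fun i j => (T α * T β) i.succ j.succ := by
      intro α β; ext i j
      simp only [hWdef, Matrix.mul_apply, Matrix.of_apply]
      rw [Fin.sum_univ_succ (f := fun l => T α i.succ l * T β l j.succ)]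
      simp [hT0]
    have hWcomm : ∀ α β, Wm α * Wm β = Wm β * Wm α := by
      intro α β; rw [hWprod, hWprod, hTT, hTT, hcomm]
    obtain ⟨U', hU', htri'⟩ := ih Wm hWcomm
    refine ⟨U * expandM U', ?_, ?_⟩
    · rw [conjTranspose_mul]
      calc (expandM U')ᴴ * Uᴴ * (U * expandM U')
          = (expandM U')ᴴ * ((Uᴴ * U) * expandM U') := by simp [Matrix.mul_assoc]
        _ = 1 := by
            rw [hU, Matrix.one_mul, expandM_conjTranspose, expandM_mul, hU', expandM_one]
    · intro α i j hij
      have hM : (U * expandM U')ᴴ * V α * (U * expandM U')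
          = (expandM U')ᴴ * T α * expandM U' := by
        rw [hTdef, conjTranspose_mul]; simp only [Matrix.mul_assoc]
      rw [hM]
      have hi0 : i ≠ 0 := by
        intro h; rw [h] at hij; simp at hij
      obtain ⟨i', rfl⟩ := Fin.eq_succ_of_ne_zero hi0
      rcases Fin.eq_zero_or_eq_succ j with rfl | ⟨j', rfl⟩
      · have hTE : ∀ kk, (T α * expandM U') kk 0 = T α kk 0 := by
          intro kk
          rw [Matrix.mul_apply, Fin.sum_univ_succ]
          simp
        rw [Matrix.mul_assoc, Matrix.mul_apply, Fin.sum_univ_succ]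
        simp [conjTranspose_apply, hTE, hT0]
      · have hj : (j' : ℕ) < (i' : ℕ) := by
          simp only [Fin.val_succ] at hij; omega
        have key : ((expandM U')ᴴ * T α * expandM U') i'.succ j'.succ
            = (U'ᴴ * Wm α * U') i' j' := by
          rw [Matrix.mul_assoc ((expandM U')ᴴ) (T α) (expandM U'),
            Matrix.mul_assoc (U'ᴴ) (Wm α) U', Matrix.mul_apply, Matrix.mul_apply,
            Fin.sum_univ_succ (f := fun kk => (expandM U')ᴴ i'.succ kk * (T α * expandM U') kk j'.succ)]
          simp only [conjTranspose_apply, expandM_0s, star_zero, zero_mul, zero_add,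
            expandM_ss]
          refine Finset.sum_congr rfl fun k' _ => ?_
          congr 1
          rw [Matrix.mul_apply, Matrix.mul_apply, Fin.sum_univ_succ]
          simp [hWdef]
        rw [key]
        exact htri' α i' j' hj

lemma triang_diag {m n : ℕ} (T : Fin m → Matrix (Fin n) (Fin n) ℂ)
    (htri : ∀ α (i j : Fin n), (j : ℕ) < (i : ℕ) → T α i j = 0)
    (hcomm : ∀ α β, T α * T β = T β * T α)
    (hnorm : ∑ α, (T α)ᴴ * T α = 1) :
    ∀ α (i j : Fin n), i ≠ j → T α i j = 0 := by
  -- entrywise form of hnorm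
  have hne : ∀ p q : Fin n,
      ∑ α, ∑ l, star (T α l p) * T α l q = (if p = q then (1:ℂ) else 0) := by
    intro p q
    have := congrFun (congrFun hnorm p) q
    simpa [Matrix.sum_apply, Matrix.mul_apply, Matrix.conjTranspose_apply,
      Matrix.one_apply] using this
  -- main claim by strong induction on the column
  have main : ∀ (N : ℕ) (j : Fin n), (j : ℕ) = N →
      ∀ α (i : Fin n), (i : ℕ) < (j : ℕ) → T α i j = 0 := by
    intro N
    induction N using Nat.strong_induction_on with
    | _ N IH =>
    intro j hjN
    -- all columns before j are diagonal
    have hdiagcol : ∀ (j' : Fin n), (j' : ℕ) < (j : ℕ) →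
        ∀ α (i : Fin n), i ≠ j' → T α i j' = 0 := by
      intro j' hj' α i hne'
      rcases lt_or_gt_of_ne (show (i:ℕ) ≠ (j':ℕ) from fun h => hne' (Fin.ext h)) with h | h
      · exact IH (j' : ℕ) (by omega) j' rfl α i h
      · exact htri α i j' h
    -- columns before j have unit norm concentrated on the diagonal
    have hcolnorm : ∀ (j' : Fin n), (j' : ℕ) < (j : ℕ) →
        ∑ α, star (T α j' j') * T α j' j' = 1 := by
      intro j' hj'
      have h1 := hne j' j'
      rw [if_pos rfl] at h1
      rw [← h1]
      refine Finset.sum_congr rfl fun α _ => ?_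
      rw [Finset.sum_eq_single j']
      · intro l _ hl
        rw [hdiagcol j' hj' α l hl, mul_zero]
      · intro h; exact absurd (Finset.mem_univ j') h
    by_contra hcon
    push_neg at hcon
    obtain ⟨α₀, k₀, hk₀, hx₀⟩ := hcon
    have hk₀j : k₀ ≠ j := fun h => by rw [h] at hk₀; omega
    -- notation
    set a : Fin m → ℂ := fun α => T α k₀ k₀ with ha
    set bb : Fin m → ℂ := fun α => T α j j with hbb
    set x : Fin m → ℂ := fun α => T α k₀ j with hx
    -- (F1)
    have F1 : ∑ α, star (a α) * a α = 1 := hcolnorm k₀ hk₀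
    -- (F2)
    have F2 : ∑ α, star (a α) * x α = 0 := by
      have h1 := hne k₀ j
      rw [if_neg hk₀j] at h1
      rw [← h1]
      refine Finset.sum_congr rfl fun α _ => ?_
      rw [Finset.sum_eq_single k₀]
      · intro l _ hl
        rw [hdiagcol k₀ hk₀ α l hl, star_zero, zero_mul]
      · intro h; exact absurd (Finset.mem_univ k₀) h
    -- (F3)
    have F3 : ∀ α β, (a α - bb α) * x β = (a β - bb β) * x α := by
      intro α β
      have hprod : ∀ γ δ, (T γ * T δ) k₀ j = a γ * x δ + x γ * bb δ := by
        intro γ δ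
        rw [Matrix.mul_apply]
        rw [Finset.sum_eq_add_of_mem k₀ j (Finset.mem_univ _) (Finset.mem_univ _) hk₀j]
        intro l _ ⟨hl1, hl2⟩
        rcases lt_trichotomy (l : ℕ) (j : ℕ) with h | h | h
        · rw [hdiagcol l h γ k₀ (fun hh => hl1 hh.symm), zero_mul]
        · exact absurd (Fin.ext h) hl2
        · rw [htri δ l j h, mul_zero]
      have := congrFun (congrFun (hcomm α β) k₀) j
      rw [hprod, hprod] at this
      ring_nf
      ring_nf at this
      linear_combination this
    -- a - bb is proportional to x
    set c : ℂ := (a α₀ - bb α₀) / x α₀ with hc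
    have hab : ∀ α, a α - bb α = c * x α := by
      intro α
      have h3 := F3 α α₀
      have hx0' : x α₀ ≠ 0 := hx₀
      rw [hc, div_mul_eq_mul_div, eq_div_iff hx0']
      linear_combination h3
    -- norm computation for bb
    have hb_eq : ∑ α, star (bb α) * bb α
        = 1 + (star c * c) * ∑ α, star (x α) * x α := by
      have hxa : ∑ α, star (x α) * a α = 0 := by
        have := congrArg star F2
        rw [star_sum] at this
        simpa [star_mul', mul_comm] using this
      have hbeach : ∀ α, star (bb α) * bb α
          = star (a α) * a α - (star (a α) * x α) * c - (star (x α) * a α) * star c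
            + (star c * c) * (star (x α) * x α) := by
        intro α
        have h4 : bb α = a α - c * x α := by have := hab α; linear_combination -this
        rw [h4]
        simp only [star_sub, star_mul']
        ring
      rw [Finset.sum_congr rfl fun α _ => hbeach α]
      rw [Finset.sum_add_distrib, Finset.sum_sub_distrib, Finset.sum_sub_distrib,
        ← Finset.sum_mul, ← Finset.sum_mul, ← Finset.mul_sum, F1, F2, hxa]
      ring
    -- pass to real parts
    have hreal : ∀ (f : Fin m → ℂ), ∑ α, star (f α) * f α
        = ((∑ α, Complex.normSq (f α) : ℝ) : ℂ) := by
      intro f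
      push_cast
      refine Finset.sum_congr rfl fun α _ => ?_
      rw [← Complex.mul_conj (f α)]
      simp [RCLike.star_def, mul_comm]
    have hbreal : ∑ α, Complex.normSq (bb α)
        = 1 + Complex.normSq c * ∑ α, Complex.normSq (x α) := by
      have := hb_eq
      rw [hreal bb, hreal x] at this
      have hcc : star c * c = (Complex.normSq c : ℂ) := by
        rw [RCLike.star_def, mul_comm, Complex.mul_conj]
      have h5 : ((∑ α, Complex.normSq (bb α) : ℝ) : ℂ)
          = ((1 + Complex.normSq c * ∑ α, Complex.normSq (x α) : ℝ) : ℂ) := by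
        rw [this, hcc]
        push_cast
        ring
      exact_mod_cast h5
    -- the (j,j) entry of hnorm gives a contradiction
    have hjj := hne j j
    rw [if_pos rfl] at hjj
    have hjjreal : ∑ α, ∑ l, Complex.normSq (T α l j) = 1 := by
      have h6 : ((∑ α, ∑ l, Complex.normSq (T α l j) : ℝ) : ℂ) = 1 := by
        push_cast
        rw [← hjj]
        refine Finset.sum_congr rfl fun α _ => Finset.sum_congr rfl fun l _ => ?_
        rw [← Complex.mul_conj (T α l j)]
        simp [RCLike.star_def, mul_comm]
      exact_mod_cast h6
    have hlow : ∀ α, Complex.normSq (bb α) + Complex.normSq (x α)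
        ≤ ∑ l, Complex.normSq (T α l j) := by
      intro α
      have hsub : ({k₀, j} : Finset (Fin n)) ⊆ Finset.univ := Finset.subset_univ _
      have := Finset.sum_le_sum_of_subset_of_nonneg hsub
        (fun l _ _ => Complex.normSq_nonneg (T α l j))
      rwa [Finset.sum_pair hk₀j, add_comm] at this
    have hsum_ge : 1 + Complex.normSq (x α₀) ≤ 1 := by
      calc 1 + Complex.normSq (x α₀)
          ≤ (1 + Complex.normSq c * ∑ α, Complex.normSq (x α))
            + ∑ α, Complex.normSq (x α) := by
            have h7 : Complex.normSq (x α₀) ≤ ∑ α, Complex.normSq (x α) :=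
              Finset.single_le_sum (fun α _ => Complex.normSq_nonneg _) (Finset.mem_univ α₀)
            have h8 : 0 ≤ Complex.normSq c * ∑ α, Complex.normSq (x α) :=
              mul_nonneg (Complex.normSq_nonneg _)
                (Finset.sum_nonneg fun α _ => Complex.normSq_nonneg _)
            linarith
        _ = ∑ α, Complex.normSq (bb α) + ∑ α, Complex.normSq (x α) := by
            rw [hbreal]
        _ = ∑ α, (Complex.normSq (bb α) + Complex.normSq (x α)) := by
            rw [Finset.sum_add_distrib]
        _ ≤ ∑ α, ∑ l, Complex.normSq (T α l j) :=
            Finset.sum_le_sum fun α _ => hlow α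
        _ = 1 := hjjreal
    have : Complex.normSq (x α₀) > 0 := Complex.normSq_pos.mpr hx₀
    linarith
  intro α i j hij
  rcases lt_or_gt_of_ne (show (i:ℕ) ≠ (j:ℕ) from fun h => hij (Fin.ext h)) with h | h
  · exact main (j : ℕ) j rfl α i h
  · exact htri α i j h

/-- Commuting Kraus operators are simultaneously unitarily diagonalizable. -/
theorem commuting_kraus_simultaneously_diagonalizable (n m : ℕ)
    (V : Fin m → Matrix (Fin n) (Fin n) ℂ)
    (hcomm : ∀ α β, V α * V β = V β * V α)
    (hnorm : ∑ α, (V α)ᴴ * V α = 1) :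
    ∃ U : Matrix (Fin n) (Fin n) ℂ, Uᴴ * U = 1 ∧
      ∃ D : Fin m → Matrix (Fin n) (Fin n) ℂ,
        (∀ α, (D α).IsDiag) ∧ ∀ α, V α = U * D α * Uᴴ := by
  obtain ⟨U, hU, htri⟩ := simul_triang n V hcomm
  have hUU : U * Uᴴ = 1 := mul_eq_one_comm.mp hU
  set T : Fin m → Matrix (Fin n) (Fin n) ℂ := fun α => Uᴴ * V α * U with hTdef
  have hTcomm : ∀ α β, T α * T β = T β * T α := by
    intro α β
    have key : ∀ γ δ, T γ * T δ = Uᴴ * (V γ * V δ) * U := by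
      intro γ δ
      simp only [hTdef, Matrix.mul_assoc]
      rw [← Matrix.mul_assoc U Uᴴ (V δ * U), hUU, Matrix.one_mul]
    rw [key, key, hcomm]
  have hTnorm : ∑ α, (T α)ᴴ * T α = 1 := by
    have key : ∀ α, (T α)ᴴ * T α = Uᴴ * ((V α)ᴴ * V α) * U := by
      intro α
      simp only [hTdef, Matrix.conjTranspose_mul, Matrix.conjTranspose_conjTranspose,
        Matrix.mul_assoc]
      rw [← Matrix.mul_assoc U Uᴴ (V α * U), hUU, Matrix.one_mul]
    rw [Finset.sum_congr rfl fun α _ => key α, ← Finset.sum_mul, ← Finset.mul_sum]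
    rw [hnorm, Matrix.mul_one, hU]
  have hdiag := triang_diag T htri hTcomm hTnorm
  refine ⟨U, hU, T, fun α i j hij => hdiag α i j hij, fun α => ?_⟩
  simp only [hTdef]
  calc V α = (U * Uᴴ) * V α * (U * Uᴴ) := by rw [hUU, Matrix.one_mul, Matrix.mul_one]
    _ = U * (Uᴴ * V α * U) * Uᴴ := by simp only [Matrix.mul_assoc]
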